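/- Let H be a nonzero 2×2 complex matrix and let X(s₁,s₂) be the Alamouti matrix. Write X(s₁,s₂) = u₁A₁ + u₂A₂ + u₃A₃ + u₄A₄ with s₁ = u₁ + iu₂, s₂ = u₃ + iu₄, where A₁ = I₂, A₂ = diag(i,−i), A₃ = [[0,−1],[1,0]], A₄ = [[0,i],[i,0]]. Then the four matrices HA₁, HA₂, HA₃, HA₄, regarded as vectors in ℝ⁸, are pairwise orthogonal, each with squared norm ‖H‖_F². -/

import Mathlib

open Complex Matrix

noncomputable section

/-- The Alamouti map. -/
def alamouti (s₁ s₂ : ℂ) : Matrix (Fin 2) (Fin 2) ℂ :=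
  !![s₁, -(starRingEnd ℂ s₂); s₂, starRingEnd ℂ s₁]

/-- The four matrices `A₁ = I₂`, `A₂ = diag(i,−i)`, `A₃ = [[0,−1],[1,0]]`,
`A₄ = [[0,i],[i,0]]` in the decomposition of the Alamouti code. -/
def alamoutiBasis : Fin 4 → Matrix (Fin 2) (Fin 2) ℂ :=
  ![1, !![Complex.I, 0; 0, -Complex.I], !![0, -1; 1, 0], !![0, Complex.I; Complex.I, 0]]

lemma ct_fin_two (a b c d : ℂ) :
    !![a, b; c, d]ᴴ = !![star a, star c; star b, star d] := by
  ext i j; fin_cases i <;> fin_cases j <;> rfl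

/-- Writing `X(s₁,s₂) = ∑ uₖ Aₖ` with `s₁ = u₁ + iu₂`, `s₂ = u₃ + iu₄`: for any nonzero
`H ∈ M₂(ℂ)`, the matrices `HA₁, …, HA₄`, regarded as vectors in `ℝ⁸` (with the real inner
product `⟨M,N⟩ = Re Tr(M·Nᴴ)`), are pairwise orthogonal, each of squared norm `‖H‖_F²`. -/
theorem stmt_18 (H : Matrix (Fin 2) (Fin 2) ℂ) (hH : H ≠ 0) :
    (∀ u : Fin 4 → ℝ,
      alamouti ((u 0 : ℂ) + u 1 * Complex.I) ((u 2 : ℂ) + u 3 * Complex.I) =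
        ∑ k : Fin 4, (u k : ℂ) • alamoutiBasis k) ∧
    (∀ k l : Fin 4, k ≠ l →
      (((H * alamoutiBasis k) * (H * alamoutiBasis l)ᴴ).trace).re = 0) ∧
    (∀ k : Fin 4,
      (((H * alamoutiBasis k) * (H * alamoutiBasis k)ᴴ).trace).re =
        ∑ i : Fin 2, ∑ j : Fin 2, ‖H i j‖ ^ 2) := by
  clear hH
  rw [Matrix.eta_fin_two H]
  refine ⟨?_, ?_, ?_⟩
  · intro u
    ext i j
    fin_cases i <;> fin_cases j <;>
      simp [alamouti, alamoutiBasis, Fin.sum_univ_four, Complex.ext_iff] <;> ring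
  · intro k l hkl
    fin_cases k <;> fin_cases l <;> simp_all <;>
      simp [alamoutiBasis, Matrix.one_fin_two, Matrix.mul_fin_two, ct_fin_two,
        Matrix.trace_fin_two_of, Complex.star_def, Complex.add_re, Complex.mul_re,
        Complex.mul_im] <;> ring
  · intro k
    fin_cases k <;>
      simp [alamoutiBasis, Matrix.one_fin_two, Matrix.mul_fin_two, ct_fin_two,
        Matrix.trace_fin_two_of, Complex.star_def, Fin.sum_univ_two, Complex.add_re,
        Complex.mul_re, Complex.mul_im, Complex.sq_norm, Complex.normSq_apply] <;> ring

end
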